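/- arXiv:1612.00142 — 2 statements merged into one kernel-verified Lean document; each statement's English description precedes it below -/
import Mathlib

section
/- Let f₁(x) := x₂, f₂(x) := x₁ + x₂², f₃(x) := −x₁ − x₁|x₁| + x₂² for x = (x₁, x₂) ∈ ℝ², let x⁰ := (0,0), and let Mⁱ := {x ∈ ℝ² : f_i(x) ≤ 0} for i = 1, 2, 3. Then T(M¹; x⁰) = {(u₁, u₂) : u₂ ≤ 0}, T(M²; x⁰) = {(u₁, u₂) : u₁ ≤ 0}, T(M³; x⁰) = {(u₁, u₂) : u₁ ≥ 0}, and consequently ∩_{i=1}^3 T(Mⁱ; x⁰) = {(u₁, u₂) ∈ ℝ² : u₁ = 0, u₂ ≤ 0}. -/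
open Filter Topology Set

noncomputable section

/-- The (first-order) tangent cone `T(C; x⁰)` in `ℝ²`. -/
def tcone (C : Set (ℝ × ℝ)) (x0 : ℝ × ℝ) : Set (ℝ × ℝ) :=
  {d | ∃ t : ℕ → ℝ, ∃ dk : ℕ → ℝ × ℝ,
    (∀ k, 0 < t k) ∧ Tendsto t atTop (𝓝 0) ∧ Tendsto dk atTop (𝓝 d) ∧
    ∀ k, x0 + t k • dk k ∈ C}

/-- `f₁(x) = x₂`. -/
def f₁ (x : ℝ × ℝ) : ℝ := x.2

/-- `f₂(x) = x₁ + x₂²`. -/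
def f₂ (x : ℝ × ℝ) : ℝ := x.1 + x.2 ^ 2

/-- `f₃(x) = −x₁ − x₁|x₁| + x₂²`. -/
def f₃ (x : ℝ × ℝ) : ℝ := -x.1 - x.1 * |x.1| + x.2 ^ 2

/-- `M¹ = {x : f₁(x) ≤ 0}`. -/
def M₁ : Set (ℝ × ℝ) := {x | f₁ x ≤ 0}

/-- `M² = {x : f₂(x) ≤ 0}`. -/
def M₂ : Set (ℝ × ℝ) := {x | f₂ x ≤ 0}

/-- `M³ = {x : f₃(x) ≤ 0}`. -/
def M₃ : Set (ℝ × ℝ) := {x | f₃ x ≤ 0}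

private lemma tpos (k : ℕ) : (0:ℝ) < ((k:ℝ)+1)⁻¹ := by positivity

private lemma ttend : Tendsto (fun k : ℕ => ((k:ℝ)+1)⁻¹) atTop (𝓝 (0:ℝ)) := by
  simpa [one_div] using (tendsto_one_div_add_atTop_nhds_zero_nat :
    Tendsto (fun n : ℕ => 1 / ((n : ℝ) + 1)) atTop (𝓝 0))

private lemma hM1 : tcone M₁ (0, 0) = {u : ℝ × ℝ | u.2 ≤ 0} := by
  ext u
  constructor
  · rintro ⟨t, dk, htpos, htt, hdk, hmem⟩
    have hle : ∀ k, (dk k).2 ≤ 0 := by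
      intro k
      have := hmem k
      simp only [M₁, f₁, mem_setOf_eq, Prod.snd_add, Prod.smul_snd, smul_eq_mul] at this
      nlinarith [htpos k]
    have h2 : Tendsto (fun k => (dk k).2) atTop (𝓝 u.2) :=
      (continuous_snd.tendsto u).comp hdk
    exact le_of_tendsto' h2 hle
  · intro hu
    replace hu : u.2 ≤ 0 := hu
    exact ⟨fun k => ((k:ℝ)+1)⁻¹, fun _ => u, tpos, ttend, tendsto_const_nhds,
      fun k => by
        simp only [M₁, f₁, mem_setOf_eq, Prod.snd_add, Prod.smul_snd, smul_eq_mul, zero_add]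
        nlinarith [mul_nonneg (tpos k).le (neg_nonneg.mpr hu)]⟩

private lemma hM2 : tcone M₂ (0, 0) = {u : ℝ × ℝ | u.1 ≤ 0} := by
  ext u
  constructor
  · rintro ⟨t, dk, htpos, htt, hdk, hmem⟩
    have hle : ∀ k, (dk k).1 + t k * (dk k).2 ^ 2 ≤ 0 := by
      intro k
      have := hmem k
      simp only [M₂, f₂, mem_setOf_eq, Prod.fst_add, Prod.snd_add, Prod.smul_fst,
        Prod.smul_snd, smul_eq_mul] at this
      nlinarith [htpos k]
    have h2 : Tendsto (fun k => (dk k).1 + t k * (dk k).2 ^ 2) atTop (𝓝 (u.1 + 0 * u.2 ^ 2)) :=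
      ((continuous_fst.tendsto u).comp hdk).add
        (htt.mul (((continuous_snd.tendsto u).comp hdk).pow 2))
    have := le_of_tendsto' h2 hle
    show u.1 ≤ 0
    linarith
  · intro hu
    replace hu : u.1 ≤ 0 := hu
    refine ⟨fun k => ((k:ℝ)+1)⁻¹, fun k => (u.1 - ((k:ℝ)+1)⁻¹ * u.2 ^ 2, u.2),
      tpos, ttend, ?_, fun k => ?_⟩
    · have : Tendsto (fun k : ℕ => u.1 - ((k:ℝ)+1)⁻¹ * u.2 ^ 2) atTop (𝓝 (u.1 - 0 * u.2 ^ 2)) :=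
        tendsto_const_nhds.sub (ttend.mul tendsto_const_nhds)
      simpa using this.prodMk_nhds (tendsto_const_nhds : Tendsto (fun _ : ℕ => u.2) atTop (𝓝 u.2))
    · simp only [M₂, f₂, mem_setOf_eq, Prod.fst_add, Prod.snd_add, Prod.smul_fst,
        Prod.smul_snd, smul_eq_mul, zero_add]
      have h := tpos k
      nlinarith [mul_nonneg h.le (neg_nonneg.mpr hu)]

private lemma hM3 : tcone M₃ (0, 0) = {u : ℝ × ℝ | 0 ≤ u.1} := by
  ext u
  constructor
  · rintro ⟨t, dk, htpos, htt, hdk, hmem⟩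
    have hle : ∀ k, -(dk k).1 - t k * ((dk k).1 * |(dk k).1|) + t k * (dk k).2 ^ 2 ≤ 0 := by
      intro k
      have := hmem k
      simp only [M₃, f₃, mem_setOf_eq, Prod.fst_add, Prod.snd_add, Prod.smul_fst,
        Prod.smul_snd, smul_eq_mul, zero_add] at this
      have habs : |t k * (dk k).1| = t k * |(dk k).1| := by
        rw [abs_mul, abs_of_pos (htpos k)]
      rw [habs] at this
      nlinarith [htpos k]
    have h1 : Tendsto (fun k => (dk k).1) atTop (𝓝 u.1) := (continuous_fst.tendsto u).comp hdk
    have h2 : Tendsto (fun k => -(dk k).1 - t k * ((dk k).1 * |(dk k).1|) + t k * (dk k).2 ^ 2)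
        atTop (𝓝 (-u.1 - 0 * (u.1 * |u.1|) + 0 * u.2 ^ 2)) :=
      (h1.neg.sub (htt.mul (h1.mul h1.abs))).add
        (htt.mul (((continuous_snd.tendsto u).comp hdk).pow 2))
    have := le_of_tendsto' h2 hle
    simp only [zero_mul, sub_zero, add_zero] at this
    show 0 ≤ u.1
    linarith
  · intro hu
    replace hu : 0 ≤ u.1 := hu
    refine ⟨fun k => ((k:ℝ)+1)⁻¹, fun k => (u.1 + ((k:ℝ)+1)⁻¹ * u.2 ^ 2, u.2),
      tpos, ttend, ?_, fun k => ?_⟩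
    · have : Tendsto (fun k : ℕ => u.1 + ((k:ℝ)+1)⁻¹ * u.2 ^ 2) atTop (𝓝 (u.1 + 0 * u.2 ^ 2)) :=
        tendsto_const_nhds.add (ttend.mul tendsto_const_nhds)
      simpa using this.prodMk_nhds (tendsto_const_nhds : Tendsto (fun _ : ℕ => u.2) atTop (𝓝 u.2))
    · simp only [M₃, f₃, mem_setOf_eq, Prod.fst_add, Prod.snd_add, Prod.smul_fst,
        Prod.smul_snd, smul_eq_mul, zero_add]
      have h := tpos k
      set s : ℝ := ((k:ℝ)+1)⁻¹ with hs
      have hx : (0:ℝ) ≤ s * (u.1 + s * u.2 ^ 2) :=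
        mul_nonneg h.le (add_nonneg hu (mul_nonneg h.le (sq_nonneg u.2)))
      have habs : |s * (u.1 + s * u.2 ^ 2)| = s * (u.1 + s * u.2 ^ 2) := abs_of_nonneg hx
      rw [habs]
      nlinarith [hu, hx, h, sq_nonneg (s * (u.1 + s * u.2 ^ 2)), mul_nonneg h.le hu]

/-- Computation of the tangent cones in Example 3.1. -/
theorem stmt_10 :
    tcone M₁ (0, 0) = {u : ℝ × ℝ | u.2 ≤ 0} ∧
    tcone M₂ (0, 0) = {u : ℝ × ℝ | u.1 ≤ 0} ∧
    tcone M₃ (0, 0) = {u : ℝ × ℝ | 0 ≤ u.1} ∧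
    tcone M₁ (0, 0) ∩ tcone M₂ (0, 0) ∩ tcone M₃ (0, 0)
      = {u : ℝ × ℝ | u.1 = 0 ∧ u.2 ≤ 0} := by
  refine ⟨hM1, hM2, hM3, ?_⟩
  rw [hM1, hM2, hM3]
  ext u
  simp only [mem_inter_iff, mem_setOf_eq]
  constructor
  · rintro ⟨⟨h2, h1⟩, h3⟩
    exact ⟨le_antisymm h1 h3, h2⟩
  · rintro ⟨h1, h2⟩
    exact ⟨⟨h2, h1.le⟩, h1.ge⟩
end
end

section
/- Let f₁(x) := x₂, f₂(x) := x₁ + x₂², f₃(x) := −x₁ − x₁|x₁| + x₂² for x = (x₁, x₂) ∈ ℝ², let x⁰ := (0,0), Mⁱ := {x ∈ ℝ² : f_i(x) ≤ 0} for i = 1, 2, 3, and Qⁱ := ∩_{k ≠ i} Mᵏ (so Q¹ = M² ∩ M³, Q² = M¹ ∩ M³, Q³ = M¹ ∩ M²). Then Q¹ = {(0,0)}, T(Q¹; x⁰) = {(0,0)}, hence ∩_{i=1}^3 T(Qⁱ; x⁰) = {(0,0)}, and this is a proper subset of ∩_{i=1}^3 T(Mⁱ; x⁰) = {(u₁, u₂)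 ∈ ℝ² : u₁ = 0, u₂ ≤ 0}. -/
open Filter Topology Set

noncomputable section

lemma t_pos (k : ℕ) : (0:ℝ) < 1 / ((k:ℝ) + 1) := by positivity

lemma t_tend : Tendsto (fun k : ℕ => 1 / ((k:ℝ) + 1)) atTop (𝓝 0) :=
  tendsto_one_div_add_atTop_nhds_zero_nat

/-- If `x0 ∈ C` then `0 ∈ tcone C x0`. -/
lemma zero_mem_tcone {C : Set (ℝ × ℝ)} {x0 : ℝ × ℝ} (h : x0 ∈ C) :
    (0, 0) ∈ tcone C x0 := by
  refine ⟨fun k => 1 / ((k:ℝ) + 1), fun _ => (0, 0), t_pos, t_tend, tendsto_const_nhds, ?_⟩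
  intro k
  simpa [Prod.mk_zero_zero] using h

lemma Q1_eq : M₂ ∩ M₃ = ({(0, 0)} : Set (ℝ × ℝ)) := by
  ext x
  simp only [M₂, M₃, f₂, f₃, mem_inter_iff, mem_setOf_eq, mem_singleton_iff, Prod.ext_iff]
  constructor
  · rintro ⟨h2, h3⟩
    have hx1 : x.1 ≤ 0 := by nlinarith [sq_nonneg x.2]
    have habs : |x.1| = -x.1 := abs_of_nonpos hx1
    rw [habs] at h3
    constructor <;> nlinarith [sq_nonneg x.2, sq_nonneg x.1]
  · rintro ⟨h1, h2⟩
    rw [h1, h2]; norm_num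

lemma tcone_Q1 : tcone (M₂ ∩ M₃) (0, 0) = ({(0, 0)} : Set (ℝ × ℝ)) := by
  apply Subset.antisymm
  · rintro d ⟨t, dk, ht, htl, hdl, hm⟩
    have hdk : ∀ k, dk k = (0, 0) := by
      intro k
      have := hm k
      rw [Q1_eq] at this
      simp only [mem_singleton_iff] at this
      have h0 : t k • dk k = (0, 0) := by
        have : ((0:ℝ), (0:ℝ)) + t k • dk k = (0, 0) := this
        simpa [Prod.mk_zero_zero] using this
      have := smul_eq_zero.mp (show t k • dk k = 0 from h0)
      rcases this with h | h
      · exact absurd h (ne_of_gt (ht k))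
      · exact h
    have : Tendsto dk atTop (𝓝 ((0:ℝ), (0:ℝ))) := by
      simp only [funext hdk]; exact tendsto_const_nhds
    have := tendsto_nhds_unique hdl this
    simp [this]
  · rintro d hd
    simp only [mem_singleton_iff] at hd
    subst hd
    exact zero_mem_tcone (by rw [Q1_eq]; rfl)

lemma fst_le_of_tendsto {dk : ℕ → ℝ × ℝ} {u : ℝ × ℝ}
    (hdl : Tendsto dk atTop (𝓝 u)) (h : ∀ k, (dk k).1 ≤ 0) : u.1 ≤ 0 :=
  le_of_tendsto' ((continuous_fst.tendsto u).comp hdl) h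

lemma fst_ge_of_tendsto {dk : ℕ → ℝ × ℝ} {u : ℝ × ℝ}
    (hdl : Tendsto dk atTop (𝓝 u)) (h : ∀ k, 0 ≤ (dk k).1) : 0 ≤ u.1 :=
  ge_of_tendsto' ((continuous_fst.tendsto u).comp hdl) h

lemma snd_le_of_tendsto {dk : ℕ → ℝ × ℝ} {u : ℝ × ℝ}
    (hdl : Tendsto dk atTop (𝓝 u)) (h : ∀ k, (dk k).2 ≤ 0) : u.2 ≤ 0 :=
  le_of_tendsto' ((continuous_snd.tendsto u).comp hdl) h

lemma tcone_M_inter :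
    tcone M₁ (0, 0) ∩ tcone M₂ (0, 0) ∩ tcone M₃ (0, 0)
      = {u : ℝ × ℝ | u.1 = 0 ∧ u.2 ≤ 0} := by
  ext u
  simp only [mem_inter_iff, mem_setOf_eq]
  constructor
  · rintro ⟨⟨h1, h2⟩, h3⟩
    obtain ⟨t, dk, ht, htl, hdl, hm⟩ := h1
    have hu2 : u.2 ≤ 0 := by
      apply snd_le_of_tendsto hdl
      intro k
      have := hm k
      have h : (0:ℝ) + t k * (dk k).2 ≤ 0 := by
        simpa [M₁, f₁, Prod.add_def, Prod.smul_def, smul_eq_mul] using this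
      nlinarith [ht k]
    obtain ⟨t2, dk2, ht2, htl2, hdl2, hm2⟩ := h2
    have hu1le : u.1 ≤ 0 := by
      apply fst_le_of_tendsto hdl2
      intro k
      have := hm2 k
      have h : (0:ℝ) + t2 k * (dk2 k).1 + ((0:ℝ) + t2 k * (dk2 k).2) ^ 2 ≤ 0 := by
        simpa [M₂, f₂, Prod.add_def, Prod.smul_def, smul_eq_mul] using this
      nlinarith [ht2 k, sq_nonneg (t2 k * (dk2 k).2)]
    obtain ⟨t3, dk3, ht3, htl3, hdl3, hm3⟩ := h3
    have hu1ge : 0 ≤ u.1 := by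
      apply fst_ge_of_tendsto hdl3
      intro k
      have := hm3 k
      set a := t3 k * (dk3 k).1 with ha
      have h : -a - a * |a| + ((0:ℝ) + t3 k * (dk3 k).2) ^ 2 ≤ 0 := by
        simpa [M₃, f₃, Prod.add_def, Prod.smul_def, smul_eq_mul, ha] using this
      by_contra hneg
      push_neg at hneg
      have haneg : a < 0 := by
        have := ht3 k
        nlinarith
      rw [abs_of_neg haneg] at h
      nlinarith [sq_nonneg ((0:ℝ) + t3 k * (dk3 k).2)]
    exact ⟨le_antisymm hu1le hu1ge, hu2⟩
  · rintro ⟨hu1, hu2⟩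
    refine ⟨⟨?_, ?_⟩, ?_⟩
    · -- tcone M₁
      refine ⟨fun k => 1 / ((k:ℝ) + 1), fun _ => u, t_pos, t_tend, tendsto_const_nhds, ?_⟩
      intro k
      simp only [M₁, f₁, mem_setOf_eq, Prod.add_def, Prod.smul_def, smul_eq_mul]
      have := t_pos k
      nlinarith
    · -- tcone M₂ : dk k = (-(t k) * u.2^2, u.2)
      refine ⟨fun k => 1 / ((k:ℝ) + 1),
        fun k => (-(1 / ((k:ℝ) + 1)) * u.2 ^ 2, u.2), t_pos, t_tend, ?_, ?_⟩
      · have h1 : Tendsto (fun k : ℕ => -(1 / ((k:ℝ) + 1)) * u.2 ^ 2) atTop (𝓝 (-0 * u.2 ^ 2)) :=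
          (t_tend.neg).mul_const _
        have h2 : Tendsto (fun _ : ℕ => u.2) atTop (𝓝 u.2) := tendsto_const_nhds
        have := h1.prodMk_nhds h2
        simp only [neg_zero, zero_mul] at this
        have hu : u = (0, u.2) := by rw [← hu1]
        rw [hu]
        exact this
      · intro k
        simp only [M₂, f₂, mem_setOf_eq, Prod.add_def, Prod.smul_def, smul_eq_mul]
        ring_nf
        nlinarith [t_pos k]
    · -- tcone M₃ : dk k = ((t k) * u.2^2, u.2)
      refine ⟨fun k => 1 / ((k:ℝ) + 1),
        fun k => ((1 / ((k:ℝ) + 1)) * u.2 ^ 2, u.2), t_pos, t_tend, ?_, ?_⟩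
      · have h1 : Tendsto (fun k : ℕ => (1 / ((k:ℝ) + 1)) * u.2 ^ 2) atTop (𝓝 (0 * u.2 ^ 2)) :=
          t_tend.mul_const _
        have h2 : Tendsto (fun _ : ℕ => u.2) atTop (𝓝 u.2) := tendsto_const_nhds
        have := h1.prodMk_nhds h2
        simp only [zero_mul] at this
        have hu : u = (0, u.2) := by rw [← hu1]
        rw [hu]
        exact this
      · intro k
        simp only [M₃, f₃, mem_setOf_eq, Prod.add_def, Prod.smul_def, smul_eq_mul]
        have htk := t_pos k
        set s : ℝ := 1 / ((k:ℝ) + 1)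
        have hs : 0 < s := htk
        have habs : |0 + s * (s * u.2 ^ 2)| = s * (s * u.2 ^ 2) := by
          rw [zero_add, abs_of_nonneg]; positivity
        rw [habs]
        nlinarith [sq_nonneg (s * u.2), sq_nonneg u.2]

/-- Example 3.1: the intersection of the tangent cones of the `Qⁱ` is strictly
smaller than the intersection of the tangent cones of the `Mⁱ`. -/
theorem stmt_11 :
    M₂ ∩ M₃ = ({(0, 0)} : Set (ℝ × ℝ)) ∧
    tcone (M₂ ∩ M₃) (0, 0) = ({(0, 0)} : Set (ℝ × ℝ)) ∧
    tcone (M₂ ∩ M₃) (0, 0) ∩ tcone (M₁ ∩ M₃) (0, 0) ∩ tcone (M₁ ∩ M₂) (0, 0)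
      = ({(0, 0)} : Set (ℝ × ℝ)) ∧
    tcone (M₂ ∩ M₃) (0, 0) ∩ tcone (M₁ ∩ M₃) (0, 0) ∩ tcone (M₁ ∩ M₂) (0, 0)
      ⊂ tcone M₁ (0, 0) ∩ tcone M₂ (0, 0) ∩ tcone M₃ (0, 0) ∧
    tcone M₁ (0, 0) ∩ tcone M₂ (0, 0) ∩ tcone M₃ (0, 0)
      = {u : ℝ × ℝ | u.1 = 0 ∧ u.2 ≤ 0} := by
  have h0M : ∀ i : Fin 3, True := fun _ => trivial
  have h0₁ : ((0:ℝ), (0:ℝ)) ∈ M₁ := by simp [M₁, f₁]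
  have h0₂ : ((0:ℝ), (0:ℝ)) ∈ M₂ := by simp [M₂, f₂]
  have h0₃ : ((0:ℝ), (0:ℝ)) ∈ M₃ := by simp [M₃, f₃]
  have hQ : tcone (M₂ ∩ M₃) (0, 0) ∩ tcone (M₁ ∩ M₃) (0, 0) ∩ tcone (M₁ ∩ M₂) (0, 0)
      = ({(0, 0)} : Set (ℝ × ℝ)) := by
    apply Subset.antisymm
    · intro d hd
      have : d ∈ tcone (M₂ ∩ M₃) (0, 0) := hd.1.1
      rw [tcone_Q1] at this
      exact this
    · rintro d hd
      simp only [mem_singleton_iff] at hd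
      subst hd
      exact ⟨⟨zero_mem_tcone ⟨h0₂, h0₃⟩, zero_mem_tcone ⟨h0₁, h0₃⟩⟩, zero_mem_tcone ⟨h0₁, h0₂⟩⟩
  refine ⟨Q1_eq, tcone_Q1, hQ, ?_, tcone_M_inter⟩
  rw [hQ, tcone_M_inter]
  constructor
  · intro d hd
    simp only [mem_singleton_iff] at hd
    subst hd
    exact ⟨rfl, le_refl 0⟩
  · intro hsub
    have : ((0:ℝ), (-1:ℝ)) ∈ ({((0:ℝ), (0:ℝ))} : Set (ℝ × ℝ)) := hsub ⟨rfl, by norm_num⟩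
    simp at this
end
end
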